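/- Let n ≥ 1, let Φ : ℝⁿ → ℝⁿ be continuously differentiable, let x_c ∈ ℝⁿ and P be a real n×n matrix, and let S = {x_c + Pη : η ∈ [−1,1]ⁿ}. Let x_c′ ∈ ℝⁿ be arbitrary, let A be an invertible real n×n matrix, and let w ∈ ℝⁿ satisfy, for every j and every x ∈ S, |(A⁻¹·(Φ(x_c) − x_c′))_j| + Σ_{k=1}^{n} |(A⁻¹·DΦ_x·P)_{jk}| ≤ w_j, where DΦ_x is the Jacobian matrix of Φ at x. Then for every x ∈ S and every j, |(A⁻¹·(Φ(x) − x_c′))_j| ≤ w_j; equivalently, Φ(S) is contained in the prism {x_c′ + A·W·η : η ∈ [−1,1]ⁿ} where W is the diagonal matrix with diagonal entries w_1,…,w_n. -/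

import Mathlib

open Matrix

/-- The Jacobian matrix of a map `Φ : ℝⁿ → ℝⁿ` at a point `x`:
`(jacobian Φ x) j k = ∂Φ_j/∂x_k (x)`. -/
noncomputable def jacobian {n : ℕ} (Φ : (Fin n → ℝ) → (Fin n → ℝ)) (x : Fin n → ℝ) :
    Matrix (Fin n) (Fin n) ℝ :=
  fun j k => fderiv ℝ Φ x (Pi.single k 1) j

lemma fderiv_eq_jac {n : ℕ} (Φ : (Fin n → ℝ) → (Fin n → ℝ)) (x v : Fin n → ℝ) :
    fderiv ℝ Φ x v = (jacobian Φ x).mulVec v := by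
  have hsingle : ∀ k : Fin n, (fun j => if k = j then (1:ℝ) else 0) = Pi.single k 1 := by
    intro k; funext j; simp [Pi.single_apply, eq_comm]
  conv_lhs => rw [pi_eq_sum_univ v]
  rw [map_sum]
  funext j
  simp only [Finset.sum_apply, _root_.map_smul, Pi.smul_apply, smul_eq_mul, hsingle]
  rw [Matrix.mulVec]
  simp [jacobian, dotProduct, mul_comm]


/-- MacKay–Percival prism-bounding lemma.  If `S` is the prism with center
`x_c` and matrix `P`, `A` is invertible, and
`|(A⁻¹(Φ(x_c) − x_c′))_j| + Σ_k |(A⁻¹ ⬝ DΦ_x ⬝ P)_{jk}| ≤ w_j` for all `x ∈ S` and `j`,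
then for all `x ∈ S` and `j`, `|(A⁻¹(Φ(x) − x_c′))_j| ≤ w_j`; equivalently `Φ(S)` is
contained in the prism with center `x_c′` and matrix `A ⬝ diagonal w`. -/
theorem stmt6 {n : ℕ} (hn : 1 ≤ n)
    (Φ : (Fin n → ℝ) → (Fin n → ℝ)) (hΦ : ContDiff ℝ 1 Φ)
    (xc : Fin n → ℝ) (P : Matrix (Fin n) (Fin n) ℝ)
    (S : Set (Fin n → ℝ))
    (hS : S = {x | ∃ η : Fin n → ℝ, (∀ i, |η i| ≤ 1) ∧ x = xc + P.mulVec η})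
    (xc' : Fin n → ℝ) (A : Matrix (Fin n) (Fin n) ℝ) (hA : IsUnit A.det)
    (w : Fin n → ℝ)
    (hw : ∀ j : Fin n, ∀ x ∈ S,
      |A⁻¹.mulVec (Φ xc - xc') j| + ∑ k : Fin n, |(A⁻¹ * jacobian Φ x * P) j k| ≤ w j) :
    (∀ x ∈ S, ∀ j : Fin n, |A⁻¹.mulVec (Φ x - xc') j| ≤ w j) ∧
      (∀ x ∈ S, ∃ η : Fin n → ℝ, (∀ i, |η i| ≤ 1) ∧
        Φ x = xc' + (A * Matrix.diagonal w).mulVec η) := by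
  have hxcS : xc ∈ S := by
    rw [hS]
    exact ⟨0, fun i => by simp, by simp⟩
  have main : ∀ x ∈ S, ∀ j : Fin n, |A⁻¹.mulVec (Φ x - xc') j| ≤ w j := by
    intro x hx j
    rw [hS] at hx
    obtain ⟨η, hη, rfl⟩ := hx
    set v : Fin n → ℝ := P.mulVec η with hv
    set c : ℝ → (Fin n → ℝ) := fun t => xc + t • v with hc
    have hcS : ∀ t ∈ Set.Icc (0:ℝ) 1, c t ∈ S := by
      intro t ht
      rw [hS]
      refine ⟨t • η, fun i => ?_, ?_⟩
      · simp only [Pi.smul_apply, smul_eq_mul, abs_mul]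
        calc |t| * |η i| ≤ 1 * 1 :=
          mul_le_mul (abs_le.2 ⟨by linarith [ht.1], ht.2⟩) (hη i) (abs_nonneg _) zero_le_one
        _ = 1 := by ring
      · rw [Matrix.mulVec_smul]
    -- the function
    set g : ℝ → (Fin n → ℝ) := fun t => A⁻¹.mulVec (Φ (c t) - xc') with hg
    have hderiv : ∀ t : ℝ, HasDerivAt g (A⁻¹.mulVec ((fderiv ℝ Φ (c t)) v)) t := by
      intro t
      have hcd : HasDerivAt c v t := by
        have : HasDerivAt (fun t : ℝ => t • v) v t := by
          simpa using (hasDerivAt_id t).smul_const v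
        simpa [hc] using this.const_add xc
      have hΦd : HasFDerivAt Φ (fderiv ℝ Φ (c t)) (c t) :=
        (hΦ.differentiable one_ne_zero (c t)).hasFDerivAt
      have h1 : HasDerivAt (fun t => Φ (c t)) ((fderiv ℝ Φ (c t)) v) t :=
        hΦd.comp_hasDerivAt t hcd
      have h2 : HasDerivAt (fun t => Φ (c t) - xc') ((fderiv ℝ Φ (c t)) v) t :=
        h1.sub_const xc'
      have L := (Matrix.mulVecLin (A⁻¹)).toContinuousLinearMap
      have h3 := ((Matrix.mulVecLin (A⁻¹)).toContinuousLinearMap).hasFDerivAt.comp_hasDerivAt t h2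
      exact h3
    have hgj : ∀ t : ℝ, HasDerivAt (fun t => g t j)
        ((A⁻¹.mulVec ((fderiv ℝ Φ (c t)) v)) j) t :=
      fun t => (hasDerivAt_pi.1 (hderiv t)) j
    set C : ℝ := w j - |A⁻¹.mulVec (Φ xc - xc') j| with hC
    have bound : ∀ t ∈ Set.Icc (0:ℝ) 1, |(A⁻¹.mulVec ((fderiv ℝ Φ (c t)) v)) j| ≤ C := by
      intro t ht
      have key : A⁻¹.mulVec ((fderiv ℝ Φ (c t)) v) =
          (A⁻¹ * jacobian Φ (c t) * P).mulVec η := by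
        rw [fderiv_eq_jac, hv, Matrix.mulVec_mulVec, Matrix.mulVec_mulVec, Matrix.mul_assoc]
      rw [key]
      have h4 : |((A⁻¹ * jacobian Φ (c t) * P).mulVec η) j| ≤
          ∑ k : Fin n, |(A⁻¹ * jacobian Φ (c t) * P) j k| := by
        rw [Matrix.mulVec, dotProduct]
        refine (Finset.abs_sum_le_sum_abs _ _).trans (Finset.sum_le_sum fun k _ => ?_)
        rw [abs_mul]
        calc |(A⁻¹ * jacobian Φ (c t) * P) j k| * |η k|
            ≤ |(A⁻¹ * jacobian Φ (c t) * P) j k| * 1 :=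
              mul_le_mul_of_nonneg_left (hη k) (abs_nonneg _)
          _ = _ := mul_one _
      have := hw j (c t) (hcS t ht)
      linarith
    have mvt := Convex.norm_image_sub_le_of_norm_hasDerivWithin_le
      (f := fun t => g t j) (f' := fun t => (A⁻¹.mulVec ((fderiv ℝ Φ (c t)) v)) j)
      (s := Set.Icc (0:ℝ) 1) (C := C)
      (fun t ht => (hgj t).hasDerivWithinAt) bound (convex_Icc 0 1)
      (Set.left_mem_Icc.2 zero_le_one) (Set.right_mem_Icc.2 zero_le_one)
    have hg0 : g 0 = A⁻¹.mulVec (Φ xc - xc') := by simp [hg, hc]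
    have hg1 : g 1 = A⁻¹.mulVec (Φ (xc + P.mulVec η) - xc') := by simp [hg, hc, hv]
    have h10 : |g 1 j - g 0 j| ≤ C := by
      simpa using mvt
    rw [hg1, hg0] at h10
    show |A⁻¹.mulVec (Φ (xc + P.mulVec η) - xc') j| ≤ w j
    have habs := abs_sub_abs_le_abs_sub (A⁻¹.mulVec (Φ (xc + P.mulVec η) - xc') j)
      (A⁻¹.mulVec (Φ xc - xc') j)
    linarith
  refine ⟨main, ?_⟩
  intro x hx
  set u : Fin n → ℝ := A⁻¹.mulVec (Φ x - xc') with hu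
  have hub : ∀ j, |u j| ≤ w j := fun j => main x hx j
  refine ⟨fun i => if w i = 0 then 0 else u i / w i, fun i => ?_, ?_⟩
  · by_cases h : w i = 0
    · simp [h]
    · have hwpos : 0 < w i := lt_of_le_of_ne ((abs_nonneg _).trans (hub i)) (Ne.symm h)
      simp only [h, if_false, abs_div, abs_of_pos hwpos]
      rw [div_le_one hwpos]
      exact hub i
  · have hdiag : (Matrix.diagonal w).mulVec (fun i => if w i = 0 then 0 else u i / w i) = u := by
      funext i
      rw [Matrix.mulVec_diagonal]
      by_cases h : w i = 0
      · have : |u i| ≤ 0 := h ▸ hub i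
        have : u i = 0 := abs_nonpos_iff.1 this
        simp [h, this]
      · rw [if_neg h]
        field_simp [h]
    rw [← Matrix.mulVec_mulVec, hdiag, hu, Matrix.mulVec_mulVec, Matrix.mul_nonsing_inv A hA,
      Matrix.one_mulVec]
    funext i
    simp
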